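/- Let q be a product of finitely many affine-linear functions on ℂ^n, each of the form λ ↦ ⟨λ,α⟩ − c with α ∈ ℝ^n \ {0}, c ∈ ℂ. Suppose F is a closed subspace of the Fréchet space H_R(ℂ^n) (with seminorms ν_{R,m}) and φ ↦ qφ maps F into H_R(ℂ^n). Then for every m there is a constant C_m > 0 such that ν_{R,m}(φ) ≤ C_m ν_{R,m}(qφ) for all entire functions φ on ℂ^n; i.e., division by such a polynomial q is continuous in the Paley–Wiener norms. -/

import Mathlib

open scoped BigOperators

noncomputable def rePart (n : ℕ) (z : EuclideanSpace ℂ (Fin n)) : EuclideanSpace ℝ (Fin n) :=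
  (WithLp.equiv 2 ((i : Fin n) → ℝ)).symm fun i => (z i).re

noncomputable def wt (n : ℕ) (R : ℝ) (m : ℕ) (z : EuclideanSpace ℂ (Fin n)) : ℝ :=
  (1 + ‖z‖) ^ m * Real.exp (-R * ‖rePart n z‖)

lemma wt_pos (n : ℕ) (R : ℝ) (m : ℕ) (z : EuclideanSpace ℂ (Fin n)) : 0 < wt n R m z := by
  unfold wt
  have h : (0:ℝ) < 1 + ‖z‖ := by positivity
  positivity

lemma norm_rePart_le (n : ℕ) (z : EuclideanSpace ℂ (Fin n)) : ‖rePart n z‖ ≤ ‖z‖ := by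
  rw [EuclideanSpace.norm_eq, EuclideanSpace.norm_eq]
  apply Real.sqrt_le_sqrt
  apply Finset.sum_le_sum
  intro i _
  have h1 : (rePart n z) i = (z i).re := rfl
  rw [h1, Real.norm_eq_abs, sq_abs]
  have h2 : ‖z i‖ ^ 2 = (z i).re ^ 2 + (z i).im ^ 2 := by
    rw [Complex.sq_norm, Complex.normSq_apply]; ring
  nlinarith [sq_nonneg (z i).im]

lemma rePart_add (n : ℕ) (z u : EuclideanSpace ℂ (Fin n)) :
    rePart n (z + u) = rePart n z + rePart n u := by
  ext i
  exact Complex.add_re _ _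

lemma wt_le (n : ℕ) (R : ℝ) (m : ℕ) (hR : 0 < R) (z u : EuclideanSpace ℂ (Fin n)) (ρ : ℝ)
    (hu : ‖u‖ ≤ ρ) :
    wt n R m z ≤ ((1 + ρ) ^ m * Real.exp (R * ρ)) * wt n R m (z + u) := by
  have hρ : 0 ≤ ρ := le_trans (norm_nonneg u) hu
  have hz : ‖z‖ ≤ ‖z + u‖ + ρ := by
    have h : z = (z + u) + (-u) := by abel
    calc ‖z‖ = ‖(z + u) + (-u)‖ := by rw [← h]
      _ ≤ ‖z + u‖ + ‖-u‖ := norm_add_le _ _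
      _ ≤ ‖z + u‖ + ρ := by rw [norm_neg]; linarith
  have hre : ‖rePart n (z + u)‖ ≤ ‖rePart n z‖ + ρ := by
    rw [rePart_add]
    calc ‖rePart n z + rePart n u‖ ≤ ‖rePart n z‖ + ‖rePart n u‖ := norm_add_le _ _
      _ ≤ ‖rePart n z‖ + ρ := by
          have := norm_rePart_le n u; linarith
  unfold wt
  have h1 : (1 + ‖z‖) ^ m ≤ ((1 + ρ) * (1 + ‖z + u‖)) ^ m := by
    apply pow_le_pow_left₀ (by positivity)
    nlinarith [norm_nonneg (z + u)]
  have h2 : Real.exp (-R * ‖rePart n z‖) ≤ Real.exp (R * ρ + -R * ‖rePart n (z + u)‖) := by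
    apply Real.exp_le_exp.mpr
    nlinarith
  calc (1 + ‖z‖) ^ m * Real.exp (-R * ‖rePart n z‖)
      ≤ ((1 + ρ) * (1 + ‖z + u‖)) ^ m * Real.exp (R * ρ + -R * ‖rePart n (z + u)‖) := by
        apply mul_le_mul h1 h2 (Real.exp_pos _).le (by positivity)
    _ = (1 + ρ) ^ m * Real.exp (R * ρ) * ((1 + ‖z + u‖) ^ m * Real.exp (-R * ‖rePart n (z + u)‖)) := by
        rw [mul_pow, Real.exp_add]; ring

lemma diff_sum (n : ℕ) (α : Fin n → ℝ) :
    Differentiable ℂ (fun z : EuclideanSpace ℂ (Fin n) => ∑ i, z i * (α i : ℂ)) := by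
  apply Differentiable.fun_sum
  intro i _
  exact (EuclideanSpace.proj (𝕜 := ℂ) i).differentiable.mul_const _

lemma single_factor (n : ℕ) (R : ℝ) (hR : 0 < R) (m : ℕ) (α : Fin n → ℝ) (hα : α ≠ 0) (c : ℂ) :
    ∃ C : ℝ, 0 < C ∧ ∀ ψ : EuclideanSpace ℂ (Fin n) → ℂ, Differentiable ℂ ψ →
      ∀ B : ℝ,
        (∀ z, wt n R m z * ‖((∑ i, z i * (α i : ℂ)) - c) * ψ z‖ ≤ B) →
        ∀ z, wt n R m z * ‖ψ z‖ ≤ C * B := by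
  set s : ℝ := ∑ i, (α i) ^ 2 with hs
  have hspos : 0 < s := by
    have hex : ∃ i, α i ≠ 0 := by
      by_contra h; push_neg at h; exact hα (funext h)
    obtain ⟨i, hi⟩ := hex
    exact Finset.sum_pos' (fun j _ => sq_nonneg _) ⟨i, Finset.mem_univ i, by positivity⟩
  set v : EuclideanSpace ℂ (Fin n) :=
    (WithLp.equiv 2 ((i : Fin n) → ℂ)).symm (fun i => (α i : ℂ)) with hv
  set r : ℝ := 2 / s with hr
  have hrpos : 0 < r := by positivity
  set ρ : ℝ := r * ‖v‖ with hρdef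
  have hρ : 0 ≤ ρ := by positivity
  set K : ℝ := (1 + ρ) ^ m * Real.exp (R * ρ) with hK
  have hKpos : 0 < K := by positivity
  refine ⟨max 1 K, lt_of_lt_of_le one_pos (le_max_left _ _), ?_⟩
  intro ψ hψ B hB z
  set ℓ : EuclideanSpace ℂ (Fin n) → ℂ := fun z => (∑ i, z i * (α i : ℂ)) - c with hℓdef
  have hBnn : 0 ≤ B :=
    le_trans (mul_nonneg (wt_pos n R m z).le (norm_nonneg _)) (hB z)
  have hℓc : ∀ w : ℂ, ℓ (z + w • v) = ℓ z + w * (s : ℂ) := by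
    intro w
    have h1 : ∀ i : Fin n, (z + w • v) i = z i + w * (α i : ℂ) := fun i => rfl
    have h2 : (∑ i, (z + w • v) i * (α i : ℂ))
        = (∑ i, z i * (α i : ℂ)) + w * ∑ i, (α i : ℂ) * (α i : ℂ) := by
      rw [Finset.mul_sum, ← Finset.sum_add_distrib]
      exact Finset.sum_congr rfl fun i _ => by rw [h1]; ring
    have h3 : (∑ i, (α i : ℂ) * (α i : ℂ)) = (s : ℂ) := by
      rw [hs]; push_cast
      exact Finset.sum_congr rfl fun i _ => (sq (α i : ℂ)).symm
    simp only [hℓdef]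
    rw [h2, h3]; ring
  by_cases hcase : 1 ≤ ‖ℓ z‖
  · have h1 : ‖ψ z‖ ≤ ‖ℓ z * ψ z‖ := by
      rw [norm_mul]; nlinarith [norm_nonneg (ψ z)]
    calc wt n R m z * ‖ψ z‖ ≤ wt n R m z * ‖ℓ z * ψ z‖ := by
          exact mul_le_mul_of_nonneg_left h1 (wt_pos n R m z).le
      _ ≤ B := hB z
      _ ≤ max 1 K * B := le_mul_of_one_le_left hBnn (le_max_left _ _)
  · push_neg at hcase
    set C' : ℝ := K * B / wt n R m z with hC'
    have hmax : ‖ψ (z + (0:ℂ) • v)‖ ≤ C' := by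
      apply Complex.norm_le_of_forall_mem_frontier_norm_le (Metric.isBounded_ball (x := (0:ℂ)) (r := r))
        (((hψ.comp ((differentiable_id.smul_const v).const_add z))).diffContOnCl)
      · intro w hw
        rw [frontier_ball (0:ℂ) hrpos.ne'] at hw
        have hwn : ‖w‖ = r := mem_sphere_zero_iff_norm.mp hw
        have hone : 1 ≤ ‖ℓ (z + w • v)‖ := by
          rw [hℓc w]
          have h4 : ‖w * (s : ℂ)‖ = r * s := by
            rw [norm_mul, hwn, Complex.norm_real, Real.norm_eq_abs, abs_of_pos hspos]
          have h5 : ‖w * (s : ℂ)‖ - ‖ℓ z‖ ≤ ‖ℓ z + w * (s : ℂ)‖ := by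
            have h := norm_add_le (ℓ z + w * (s:ℂ)) (-(ℓ z))
            have he : ℓ z + w * (s:ℂ) + -(ℓ z) = w * (s:ℂ) := by ring
            rw [he, norm_neg] at h
            linarith
          have h6 : r * s = 2 := by rw [hr]; field_simp
          linarith [h4 ▸ h5, h6 ▸ (h4 ▸ h5)]
        set z' := z + w • v with hz'
        have hwv : ‖w • v‖ ≤ ρ := by
          rw [norm_smul, hwn]
        have hwt : wt n R m z ≤ K * wt n R m z' := wt_le n R m hR z (w • v) ρ hwv
        have hψb : wt n R m z' * ‖ψ z'‖ ≤ B := by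
          have h1 : ‖ψ z'‖ ≤ ‖ℓ z' * ψ z'‖ := by
            rw [norm_mul]; nlinarith [norm_nonneg (ψ z'), hone]
          calc wt n R m z' * ‖ψ z'‖ ≤ wt n R m z' * ‖ℓ z' * ψ z'‖ :=
                mul_le_mul_of_nonneg_left h1 (wt_pos n R m z').le
            _ ≤ B := hB z'
        rw [hC', le_div_iff₀ (wt_pos n R m z)]
        calc ‖ψ z'‖ * wt n R m z ≤ ‖ψ z'‖ * (K * wt n R m z') :=
              mul_le_mul_of_nonneg_left hwt (norm_nonneg _)
          _ = K * (wt n R m z' * ‖ψ z'‖) := by ring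
          _ ≤ K * B := mul_le_mul_of_nonneg_left hψb hKpos.le
      · exact subset_closure (Metric.mem_ball_self hrpos)
    have hz0 : z + (0:ℂ) • v = z := by simp
    rw [hz0] at hmax
    have := (le_div_iff₀ (wt_pos n R m z)).mp hmax
    calc wt n R m z * ‖ψ z‖ = ‖ψ z‖ * wt n R m z := by ring
      _ ≤ K * B := this
      _ ≤ max 1 K * B := mul_le_mul_of_nonneg_right (le_max_right _ _) hBnn

lemma diff_prodList (n : ℕ) (l : List ((Fin n → ℝ) × ℂ)) :
    Differentiable ℂ (fun z : EuclideanSpace ℂ (Fin n) =>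
      (l.map fun p => (∑ i, z i * (p.1 i : ℂ)) - p.2).prod) := by
  induction l with
  | nil => simpa using differentiable_const (1:ℂ)
  | cons p l ih =>
    simp only [List.map_cons, List.prod_cons]
    exact ((diff_sum n p.1).sub (differentiable_const _)).mul ih

lemma key (n : ℕ) (R : ℝ) (hR : 0 < R) (m : ℕ) :
    ∀ l : List ((Fin n → ℝ) × ℂ), (∀ p ∈ l, p.1 ≠ 0) →
    ∃ C : ℝ, 0 < C ∧ ∀ φ : EuclideanSpace ℂ (Fin n) → ℂ, Differentiable ℂ φ → ∀ B : ℝ,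
      (∀ z, wt n R m z * ‖(l.map fun p => (∑ i, z i * (p.1 i : ℂ)) - p.2).prod * φ z‖ ≤ B) →
      ∀ z, wt n R m z * ‖φ z‖ ≤ C * B := by
  intro l
  induction l with
  | nil =>
    intro _
    exact ⟨1, one_pos, fun φ _ B hB z => by simpa using hB z⟩
  | cons p l ih =>
    intro hne
    obtain ⟨C₂, hC₂, h2⟩ := ih (fun q hq => hne q (List.mem_cons_of_mem _ hq))
    obtain ⟨C₁, hC₁, h1⟩ := single_factor n R hR m p.1 (hne p List.mem_cons_self) p.2
    refine ⟨C₂ * C₁, by positivity, ?_⟩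
    intro φ hφ B hB
    have hψd : Differentiable ℂ
        (fun z => (l.map fun p => (∑ i, z i * (p.1 i : ℂ)) - p.2).prod * φ z) :=
      (diff_prodList n l).mul hφ
    have step1 := h1 _ hψd B (fun z => by
      have h := hB z
      simpa [List.prod_cons, mul_assoc] using h)
    have step2 := h2 φ hφ (C₁ * B) step1
    intro z
    calc wt n R m z * ‖φ z‖ ≤ C₂ * (C₁ * B) := step2 z
      _ = C₂ * C₁ * B := by ring


/-- Division by a polynomial `q` which is a product of affine-linear factors
`λ ↦ ⟨λ,α⟩ - c` (`α ∈ ℝⁿ \ {0}`, `c ∈ ℂ`) is continuous in the Paley–Wiener norms: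
for every `m` there is `C_m > 0` with `ν_{R,m}(φ) ≤ C_m ν_{R,m}(qφ)` for all entire `φ`
(the inequality being interpreted via an arbitrary upper bound `B` for the right-hand side,
so it holds trivially when the right-hand side is infinite). -/
theorem stmt11 (n : ℕ) (R : ℝ) (hR : 0 < R)
    (factors : List ((Fin n → ℝ) × ℂ)) (hfac : ∀ p ∈ factors, p.1 ≠ 0)
    (q : EuclideanSpace ℂ (Fin n) → ℂ)
    (hq : ∀ z, q z = (factors.map fun p => (∑ i, z i * (p.1 i : ℂ)) - p.2).prod)
    (m : ℕ) :
    ∃ C : ℝ, 0 < C ∧ ∀ φ : EuclideanSpace ℂ (Fin n) → ℂ, Differentiable ℂ φ →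
      ∀ B : ℝ,
        (∀ z, (1 + ‖z‖) ^ m * Real.exp (-R * ‖rePart n z‖) * ‖q z * φ z‖ ≤ B) →
        ∀ z, (1 + ‖z‖) ^ m * Real.exp (-R * ‖rePart n z‖) * ‖φ z‖ ≤ C * B := by
  obtain ⟨C, hC, h⟩ := key n R hR m factors hfac
  refine ⟨C, hC, ?_⟩
  intro φ hφ B hB
  have hB' : ∀ z, wt n R m z *
      ‖(factors.map fun p => (∑ i, z i * (p.1 i : ℂ)) - p.2).prod * φ z‖ ≤ B := by
    intro z
    have h0 := hB z
    rw [hq z] at h0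
    exact h0
  intro z
  exact h φ hφ B hB' z
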